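/- If α ∈ ℂ^{m×2m} satisfies αα* = I_m and αJα* = 0, where J = ((0, −I_m), (I_m, 0)) ∈ ℂ^{2m×2m}, then α*αJ + Jα*α = J. -/
import Mathlib


open Matrix

-- STATEMENT 1: if α ∈ ℂ^{m×2m} satisfies αα* = I_m and αJα* = 0, where
-- J = ((0, −I_m), (I_m, 0)), then α*αJ + Jα*α = J.
lemma herm_idem_trace_zero {n : Type*} [Fintype n] [DecidableEq n]
    (R : Matrix n n ℂ) (hH : Rᴴ = R) (hI : R * R = R) (ht : R.trace = 0) : R = 0 := by
  have h0 : (Rᴴ * R).trace = 0 := by rw [hH, hI, ht]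
  have hform : (Rᴴ * R).trace = ((∑ j, ∑ i, Complex.normSq (R i j) : ℝ) : ℂ) := by
    simp only [Matrix.trace, Matrix.diag, Matrix.mul_apply, Matrix.conjTranspose_apply]
    push_cast
    refine Finset.sum_congr rfl fun j _ => Finset.sum_congr rfl fun i _ => ?_
    rw [Complex.normSq_eq_conj_mul_self]; rfl
  rw [hform] at h0
  have hreal : (∑ j, ∑ i, Complex.normSq (R i j) : ℝ) = 0 := by exact_mod_cast h0
  have hz : ∀ j ∈ Finset.univ, ∀ i ∈ Finset.univ, Complex.normSq (R i j) = 0 := by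
    have h1 := (Finset.sum_eq_zero_iff_of_nonneg (fun j _ =>
      Finset.sum_nonneg fun i _ => Complex.normSq_nonneg _)).mp hreal
    intro j hj i hi
    exact (Finset.sum_eq_zero_iff_of_nonneg (fun i _ => Complex.normSq_nonneg _)).mp
      (h1 j hj) i hi
  ext i j
  simpa using Complex.normSq_eq_zero.mp (hz j (Finset.mem_univ _) i (Finset.mem_univ _))

theorem statement1 (m : ℕ) (α : Matrix (Fin m) (Fin m ⊕ Fin m) ℂ)
    (J : Matrix (Fin m ⊕ Fin m) (Fin m ⊕ Fin m) ℂ)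
    (hJ : J = Matrix.fromBlocks 0 (-1) 1 0)
    (h1 : α * αᴴ = 1)
    (h2 : α * J * αᴴ = 0) :
    αᴴ * α * J + J * (αᴴ * α) = J := by
  set P : Matrix (Fin m ⊕ Fin m) (Fin m ⊕ Fin m) ℂ := αᴴ * α with hPdef
  have hPH : Pᴴ = P := by rw [hPdef, conjTranspose_mul, conjTranspose_conjTranspose]
  have hP2 : P * P = P := by
    rw [hPdef, Matrix.mul_assoc, ← Matrix.mul_assoc α, h1, Matrix.one_mul]
  have hPJP : P * J * P = 0 := by
    have := congrArg (fun X => αᴴ * X * α) h2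
    simpa [hPdef, Matrix.mul_assoc] using this
  have hJJ : J * J = -1 := by
    subst hJ
    simp [Matrix.fromBlocks_multiply, Matrix.fromBlocks_neg, ← Matrix.fromBlocks_one]
  have hJH : Jᴴ = -J := by
    subst hJ
    simp [Matrix.fromBlocks_conjTranspose, Matrix.fromBlocks_neg]
  set Q : Matrix (Fin m ⊕ Fin m) (Fin m ⊕ Fin m) ℂ := -(J * P * J) with hQdef
  have hQH : Qᴴ = Q := by
    rw [hQdef]
    simp only [conjTranspose_neg, conjTranspose_mul, hJH, hPH]
    noncomm_ring
  have hQ2 : Q * Q = Q := by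
    rw [hQdef]
    calc -(J * P * J) * -(J * P * J) = J * P * (J * J) * P * J := by noncomm_ring
    _ = -(J * (P * P) * J) := by rw [hJJ]; noncomm_ring
    _ = -(J * P * J) := by rw [hP2]
  have hPQ : P * Q = 0 := by
    rw [hQdef]
    calc P * -(J * P * J) = -((P * J * P) * J) := by noncomm_ring
    _ = 0 := by rw [hPJP, zero_mul, neg_zero]
  have hQP : Q * P = 0 := by
    rw [hQdef]
    calc -(J * P * J) * P = -(J * (P * J * P)) := by noncomm_ring
    _ = 0 := by rw [hPJP, mul_zero, neg_zero]
  have htrP : P.trace = (m : ℂ) := by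
    rw [hPdef, Matrix.trace_mul_comm, h1, Matrix.trace_one]
    simp
  have htrQ : Q.trace = (m : ℂ) := by
    rw [hQdef, trace_neg, Matrix.trace_mul_cycle, hJJ]
    simp [htrP]
  have htrR : (1 - P - Q).trace = 0 := by
    have hc : ((Fintype.card (Fin m ⊕ Fin m) : ℂ)) = (m : ℂ) + m := by simp
    rw [trace_sub, trace_sub, Matrix.trace_one, htrP, htrQ, hc]
    ring
  have hRH : (1 - P - Q)ᴴ = 1 - P - Q := by
    simp [conjTranspose_sub, hPH, hQH]
  have hRR : (1 - P - Q) * (1 - P - Q) = 1 - P - Q := by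
    have : (1 - P - Q) * (1 - P - Q)
        = 1 - P - Q - (P - (P*P) - P*Q) - (Q - Q*P - (Q*Q)) := by noncomm_ring
    rw [this, hP2, hPQ, hQP, hQ2]
    noncomm_ring
  have hR0 : (1 : Matrix (Fin m ⊕ Fin m) (Fin m ⊕ Fin m) ℂ) - P - Q = 0 :=
    herm_idem_trace_zero _ hRH hRR htrR
  have hPQ1 : P + Q = 1 := by linear_combination (norm := noncomm_ring) -hR0
  rw [hQdef] at hPQ1
  rw [← sub_eq_add_neg] at hPQ1
  have expand : (P - J * P * J) * J = P * J + J * P := by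
    rw [sub_mul, mul_assoc (J * P), hJJ, mul_neg_one, sub_neg_eq_add]
  show P * J + J * P = J
  rw [← expand, hPQ1, one_mul]
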